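/- Let t1, t2, t3 > 0 with t1 ≠ t2 and t3 ≠ 1, and set K1 = t1, K2 = i·t2, K3 = −t3, K4 = −i. Let p⁺ = (p1,p2) ∈ ℝ² satisfy μ(p⁺) = 0, set p1⁻ := π − p1, let β_+ := ∂_{k2}μ(p⁺) and β_− := −conj(β_+), and assume β_− ≠ 0. Then the following cancellation identity holds: −(2/π)·(β_+/β_−)·cos(p1)·cos(p2) − β_+·exp(i(p1+p2))·(2π)^{−1} ∫_{p1⁻}^{p1+2π} dθ/(K1 + K2·exp(iθ)) + β_+·exp(i p1)·(2π)^{−1} ∫_{p1}^{p1⁻} dθ/(K3·exp(iθ) + K4) + β_+·K1·exp(i p2)·(2π)^{−1} ∫_{p1⁻}^{p1+2π} (exp(i p1) − exp(iθ))/(K1 + K2·exp(iθ))² dθ + β_+·K4·(2π)^{−1} ∫_{p1}^{p1⁻} (exp(iθ) − exp(i p1))/(K3·exp(iθ) + K4)² dθ = 0. (Note that |K1 + K2 exp(iθ)|² ≥ (t1−t2)² > 0 and |K3 exp(iθ) + K4|² ≥ (1−t3)² > 0, so all integrands are bounded.) -/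

import Mathlib

open Complex Real ComplexConjugate
set_option maxHeartbeats 2000000

lemma fne' (t1 t2 : ℝ) (ht1 : 0 < t1) (ht2 : 0 < t2) (h12 : t1 ≠ t2) (z : ℂ)
    (hz : ‖z‖ = 1) : (t1:ℂ) + Complex.I*t2*z ≠ 0 := by
  intro h
  have h2 : (t1:ℂ) = -(Complex.I*t2*z) := by linear_combination h
  have h3 := congrArg (‖·‖) h2
  simp [abs_of_pos ht1, abs_of_pos ht2, hz] at h3
  exact h12 h3

lemma gne' (t3 : ℝ) (ht3 : 0 < t3) (h31 : t3 ≠ 1) (z : ℂ)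
    (hz : ‖z‖ = 1) : -(t3:ℂ)*z - Complex.I ≠ 0 := by
  intro h
  have h2 : -((t3:ℂ)*z) = Complex.I := by linear_combination h
  have h3 := congrArg (‖·‖) h2
  simp [abs_of_pos ht3, hz] at h3
  exact h31 h3

lemma hexp' (x : ℝ) : HasDerivAt (fun θ:ℝ => Complex.exp (Complex.I*θ))
    (Complex.I * Complex.exp (Complex.I*x)) x := by
  have h : HasDerivAt (fun θ:ℝ => Complex.I*(θ:ℂ)) Complex.I x := by
    simpa using (Complex.ofRealCLM.hasDerivAt (x := x)).const_mul Complex.I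
  simpa [mul_comm] using h.cexp

lemma abs_exp_I_mul (θ : ℝ) : ‖Complex.exp (Complex.I*θ)‖ = 1 := by
  rw [mul_comm]; exact Complex.norm_exp_ofReal_mul_I θ

lemma intA (t1 t2 : ℝ) (ht1 : 0 < t1) (ht2 : 0 < t2) (h12 : t1 ≠ t2) (a b : ℂ) (u v : ℝ) :
    (-(a*b)) * (∫ θ in u..v, ((t1:ℂ) + Complex.I*t2*Complex.exp (Complex.I*θ))⁻¹)
      + (t1*b) * (∫ θ in u..v,
        (a - Complex.exp (Complex.I*θ)) / ((t1:ℂ) + Complex.I*t2*Complex.exp (Complex.I*θ))^2)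
    = (-(t1+Complex.I*t2*a)*b/t2) /
        ((t1:ℂ)+Complex.I*t2*Complex.exp (Complex.I*(v:ℝ)))
      - (-(t1+Complex.I*t2*a)*b/t2) /
        ((t1:ℂ)+Complex.I*t2*Complex.exp (Complex.I*(u:ℝ))) := by
  have fne : ∀ x : ℝ, (t1:ℂ) + Complex.I*t2*Complex.exp (Complex.I*x) ≠ 0 :=
    fun x => fne' t1 t2 ht1 ht2 h12 _ (abs_exp_I_mul x)
  have ht2' : (t2:ℂ) ≠ 0 := by exact_mod_cast ht2.ne'
  have hcont : Continuous fun θ:ℝ => (t1:ℂ) + Complex.I*t2*Complex.exp (Complex.I*θ) := by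
    fun_prop
  have hc1 : Continuous fun θ:ℝ => ((t1:ℂ) + Complex.I*t2*Complex.exp (Complex.I*θ))⁻¹ :=
    hcont.inv₀ fne
  have hc3 : Continuous fun θ:ℝ =>
      (a - Complex.exp (Complex.I*θ)) / ((t1:ℂ) + Complex.I*t2*Complex.exp (Complex.I*θ))^2 :=
    (continuous_const.sub (by fun_prop)).div (hcont.pow 2) (fun x => pow_ne_zero 2 (fne x))
  rw [← intervalIntegral.integral_const_mul, ← intervalIntegral.integral_const_mul,
    ← intervalIntegral.integral_add ((hc1.intervalIntegrable u v).const_mul _)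
      ((hc3.intervalIntegrable u v).const_mul _)]
  rw [intervalIntegral.integral_eq_sub_of_hasDerivAt
    (f := fun θ:ℝ => (-(t1+Complex.I*t2*a)*b/t2) /
      ((t1:ℂ)+Complex.I*t2*Complex.exp (Complex.I*θ)))
    (fun x _ => by
      have hf : HasDerivAt (fun θ:ℝ => (t1:ℂ)+Complex.I*t2*Complex.exp (Complex.I*θ))
          (-(t2:ℂ)*Complex.exp (Complex.I*x)) x := by
        have h0 := ((hexp' x).const_mul (Complex.I*(t2:ℂ))).const_add (t1:ℂ)
        refine h0.congr_deriv ?_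
        linear_combination ((t2:ℂ)*Complex.exp (Complex.I*x)) * Complex.I_sq
      have h2 := (hasDerivAt_const x (-(t1+Complex.I*t2*a)*b/t2)).div hf (fne x)
      refine h2.congr_deriv ?_
      have := fne x
      field_simp
      ring)
    (((hc1.intervalIntegrable u v).const_mul _).add ((hc3.intervalIntegrable u v).const_mul _))]

lemma frac_combine (x y z w : ℂ) (h : w ≠ 0) : x * w⁻¹ + y * (z / w^2) = (x*w + y*z)/w^2 := by
  field_simp

lemma intB (t3 : ℝ) (ht3 : 0 < t3) (h31 : t3 ≠ 1) (a : ℂ) (u v : ℝ) :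
    a * (∫ θ in u..v, (-(t3:ℂ)*Complex.exp (Complex.I*θ) - Complex.I)⁻¹)
      + (-Complex.I) * (∫ θ in u..v,
        (Complex.exp (Complex.I*θ) - a) / (-(t3:ℂ)*Complex.exp (Complex.I*θ) - Complex.I)^2)
    = (Complex.I*(t3*a+Complex.I)/t3) / (-(t3:ℂ)*Complex.exp (Complex.I*(v:ℝ)) - Complex.I)
      - (Complex.I*(t3*a+Complex.I)/t3) / (-(t3:ℂ)*Complex.exp (Complex.I*(u:ℝ)) - Complex.I) := by
  have gne : ∀ x : ℝ, -(t3:ℂ)*Complex.exp (Complex.I*x) - Complex.I ≠ 0 :=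
    fun x => gne' t3 ht3 h31 _ (abs_exp_I_mul x)
  have ht3' : (t3:ℂ) ≠ 0 := by exact_mod_cast ht3.ne'
  have hcont : Continuous fun θ:ℝ => -(t3:ℂ)*Complex.exp (Complex.I*θ) - Complex.I := by
    fun_prop
  have hc1 : Continuous fun θ:ℝ => (-(t3:ℂ)*Complex.exp (Complex.I*θ) - Complex.I)⁻¹ :=
    hcont.inv₀ gne
  have hc3 : Continuous fun θ:ℝ =>
      (Complex.exp (Complex.I*θ) - a) / (-(t3:ℂ)*Complex.exp (Complex.I*θ) - Complex.I)^2 :=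
    ((by fun_prop : Continuous fun θ:ℝ => Complex.exp (Complex.I*θ) - a)).div
      (hcont.pow 2) (fun x => pow_ne_zero 2 (gne x))
  rw [← intervalIntegral.integral_const_mul, ← intervalIntegral.integral_const_mul,
    ← intervalIntegral.integral_add ((hc1.intervalIntegrable u v).const_mul _)
      ((hc3.intervalIntegrable u v).const_mul _)]
  rw [intervalIntegral.integral_eq_sub_of_hasDerivAt
    (f := fun θ:ℝ => (Complex.I*(t3*a+Complex.I)/t3) /
      (-(t3:ℂ)*Complex.exp (Complex.I*θ) - Complex.I))
    (fun x _ => by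
      have hg : HasDerivAt (fun θ:ℝ => -(t3:ℂ)*Complex.exp (Complex.I*θ) - Complex.I)
          (-(t3:ℂ)*(Complex.I*Complex.exp (Complex.I*x))) x :=
        ((hexp' x).const_mul (-(t3:ℂ))).sub_const Complex.I
      have h2 := (hasDerivAt_const x (Complex.I*(t3*a+Complex.I)/t3)).div hg (gne x)
      refine h2.congr_deriv ?_
      have hgx := gne x
      have hnum : (0:ℂ) * (-(t3:ℂ)*Complex.exp (Complex.I*x) - Complex.I)
          - Complex.I*(t3*a+Complex.I)/t3 * (-(t3:ℂ)*(Complex.I*Complex.exp (Complex.I*x)))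
          = a * (-(t3:ℂ)*Complex.exp (Complex.I*x) - Complex.I)
            + (-Complex.I)*(Complex.exp (Complex.I*x) - a) := by
        field_simp
        linear_combination ((t3:ℂ)*Complex.exp (Complex.I*x)*a + Complex.exp (Complex.I*x)*Complex.I) * Complex.I_sq
      rw [frac_combine _ _ _ _ hgx, hnum])
    (((hc1.intervalIntegrable u v).const_mul _).add ((hc3.intervalIntegrable u v).const_mul _))]

/-- The characteristic polynomial of the non-interacting dimer model. -/
noncomputable def mu (t1 t2 t3 : ℝ) (k : ℝ × ℝ) : ℂ :=
  (t1 : ℂ) + Complex.I * (t2 : ℂ) * Complex.exp (Complex.I * (k.1 : ℂ))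
    - (t3 : ℂ) * Complex.exp (Complex.I * ((k.1 : ℂ) + (k.2 : ℂ)))
    - Complex.I * Complex.exp (Complex.I * (k.2 : ℂ))

/-- The cancellation identity behind the Haldane relation at first order: with `K₁ = t₁`,
`K₂ = i t₂`, `K₃ = −t₃`, `K₄ = −i`, `p₁⁻ = π − p₁`, `β₊ = ∂₂μ(p⁺)` and `β₋ = −conj β₊`,
the explicit combination of boundary integrals vanishes. -/
theorem haldane_cancellation (t1 t2 t3 : ℝ) (ht1 : 0 < t1) (ht2 : 0 < t2) (ht3 : 0 < t3)
    (h12 : t1 ≠ t2) (h31 : t3 ≠ 1)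
    (pplus : ℝ × ℝ) (hzero : mu t1 t2 t3 pplus = 0)
    (p1minus : ℝ) (hp1m : p1minus = π - pplus.1)
    (βp βm : ℂ) (hβp : βp = deriv (fun y : ℝ => mu t1 t2 t3 (pplus.1, y)) pplus.2)
    (hβm : βm = -conj βp) (hbm : βm ≠ 0) :
    -(2 / (π : ℂ)) * (βp / βm) * (Real.cos pplus.1 : ℂ) * (Real.cos pplus.2 : ℂ)
      - βp * Complex.exp (Complex.I * ((pplus.1 : ℂ) + (pplus.2 : ℂ))) * ((2 * π : ℝ) : ℂ)⁻¹ *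
        (∫ θ in p1minus..(pplus.1 + 2 * π),
          ((t1 : ℂ) + Complex.I * (t2 : ℂ) * Complex.exp (Complex.I * (θ : ℂ)))⁻¹)
      + βp * Complex.exp (Complex.I * (pplus.1 : ℂ)) * ((2 * π : ℝ) : ℂ)⁻¹ *
        (∫ θ in pplus.1..p1minus,
          (-(t3 : ℂ) * Complex.exp (Complex.I * (θ : ℂ)) - Complex.I)⁻¹)
      + βp * (t1 : ℂ) * Complex.exp (Complex.I * (pplus.2 : ℂ)) * ((2 * π : ℝ) : ℂ)⁻¹ *
        (∫ θ in p1minus..(pplus.1 + 2 * π),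
          (Complex.exp (Complex.I * (pplus.1 : ℂ)) - Complex.exp (Complex.I * (θ : ℂ)))
            / ((t1 : ℂ) + Complex.I * (t2 : ℂ) * Complex.exp (Complex.I * (θ : ℂ))) ^ 2)
      + βp * (-Complex.I) * ((2 * π : ℝ) : ℂ)⁻¹ *
        (∫ θ in pplus.1..p1minus,
          (Complex.exp (Complex.I * (θ : ℂ)) - Complex.exp (Complex.I * (pplus.1 : ℂ)))
            / (-(t3 : ℂ) * Complex.exp (Complex.I * (θ : ℂ)) - Complex.I) ^ 2)
      = 0 := by
  obtain ⟨p1, p2⟩ := pplus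
  dsimp only at hzero hβp hp1m ⊢
  subst hp1m hβm hβp
  set a := Complex.exp (Complex.I * (p1:ℂ)) with ha_def
  set b := Complex.exp (Complex.I * (p2:ℂ)) with hb_def
  have ha : a ≠ 0 := Complex.exp_ne_zero _
  have hb : b ≠ 0 := Complex.exp_ne_zero _
  have hab : Complex.exp (Complex.I*((p1:ℂ)+(p2:ℂ))) = a*b := by
    rw [mul_add, Complex.exp_add]
  -- derivative
  have hd : HasDerivAt (fun y : ℝ => mu t1 t2 t3 (p1, y)) (b - Complex.I*t3*(a*b)) p2 := by
    have h1 : HasDerivAt (fun y:ℝ => Complex.exp (Complex.I*((p1:ℂ)+(y:ℂ))))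
        (Complex.I * Complex.exp (Complex.I*((p1:ℂ)+(p2:ℂ)))) p2 := by
      have h0 : HasDerivAt (fun y:ℝ => Complex.I*((p1:ℂ)+(y:ℂ))) Complex.I p2 := by
        simpa using ((Complex.ofRealCLM.hasDerivAt (x := p2)).const_add (p1:ℂ)).const_mul Complex.I
      simpa [mul_comm] using h0.cexp
    have h2 := hexp' p2
    have h3 := ((hasDerivAt_const p2 ((t1:ℂ) + Complex.I*t2*a)).sub
      (h1.const_mul (t3:ℂ))).sub (h2.const_mul Complex.I)
    have h4 : HasDerivAt (fun y : ℝ => mu t1 t2 t3 (p1, y))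
        (0 - (t3:ℂ)*(Complex.I * Complex.exp (Complex.I*((p1:ℂ)+(p2:ℂ))))
          - Complex.I*(Complex.I * Complex.exp (Complex.I*(p2:ℂ)))) p2 := h3
    rw [hab] at h4
    convert h4 using 1
    linear_combination (b : ℂ) * Complex.I_sq
  rw [hd.deriv] at hbm ⊢
  -- conjugation facts
  have hca : (starRingEnd ℂ) a = a⁻¹ := by
    rw [ha_def, ← Complex.exp_conj, ← Complex.exp_neg]
    norm_num
  have hcb : (starRingEnd ℂ) b = b⁻¹ := by
    rw [hb_def, ← Complex.exp_conj, ← Complex.exp_neg]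
    norm_num
  have hcβ : (starRingEnd ℂ) (b - Complex.I*(t3:ℂ)*(a*b)) = b⁻¹ + Complex.I*t3*(a⁻¹*b⁻¹) := by
    simp only [map_sub, map_mul, Complex.conj_I, Complex.conj_ofReal, hca, hcb]
    ring
  rw [hcβ] at hbm ⊢
  -- exponential special values
  have hval1 : Complex.exp (Complex.I*((p1 + 2*π : ℝ):ℂ)) = a := by
    push_cast
    rw [mul_add, Complex.exp_add, ha_def]
    rw [show Complex.I*(2*(π:ℂ)) = 2*(π:ℂ)*Complex.I by ring, Complex.exp_two_pi_mul_I, mul_one]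
  have hval2 : Complex.exp (Complex.I*((π - p1 : ℝ):ℂ)) = -a⁻¹ := by
    push_cast
    rw [mul_sub, Complex.exp_sub, ha_def, ← Complex.exp_neg,
      show Complex.I*(π:ℂ) = (π:ℂ)*Complex.I by ring, Complex.exp_pi_mul_I]
    rw [Complex.exp_neg]
    field_simp
  -- the zero relation and its conjugate
  have hz : (t1:ℂ) + Complex.I*t2*a - t3*(a*b) - Complex.I*b = 0 := by
    have h := hzero
    simp only [mu] at h
    rwa [hab] at h
  have hz2 : (t1:ℂ)*(a*b) - Complex.I*t2*b - t3 + Complex.I*a = 0 := by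
    have h := congrArg (starRingEnd ℂ) hz
    simp only [map_add, map_sub, map_mul, map_zero, Complex.conj_I, Complex.conj_ofReal,
      hca, hcb] at h
    field_simp at h
    have h2 : a*b*((t1:ℂ)*(a*b) - Complex.I*t2*b - t3 + Complex.I*a) = 0 := by
      linear_combination a*b*h
    exact (mul_eq_zero.mp h2).resolve_left (mul_ne_zero ha hb)
  -- cosines
  have hcos1 : (Real.cos p1 : ℂ) = (a + a⁻¹)/2 := by
    have h := Complex.two_cos (p1:ℂ)
    rw [show ((p1:ℂ))*Complex.I = Complex.I*(p1:ℂ) by ring,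
      show (-(p1:ℂ))*Complex.I = -(Complex.I*(p1:ℂ)) by ring, Complex.exp_neg, ← ha_def] at h
    rw [Complex.ofReal_cos]
    linear_combination h/2
  have hcos2 : (Real.cos p2 : ℂ) = (b + b⁻¹)/2 := by
    have h := Complex.two_cos (p2:ℂ)
    rw [show ((p2:ℂ))*Complex.I = Complex.I*(p2:ℂ) by ring,
      show (-(p2:ℂ))*Complex.I = -(Complex.I*(p2:ℂ)) by ring, Complex.exp_neg, ← hb_def] at h
    rw [Complex.ofReal_cos]
    linear_combination h/2
  rw [hcos1, hcos2, hab]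
  -- integral combination values
  have hIA := intA t1 t2 ht1 ht2 h12 a b (π - p1) (p1 + 2*π)
  rw [hval1, hval2] at hIA
  have hIB := intB t3 ht3 h31 a p1 (π - p1)
  rw [hval2, ← ha_def] at hIB
  -- nonvanishing facts
  have habs_a : ‖a‖ = 1 := by rw [ha_def]; exact abs_exp_I_mul p1
  have habs_am : ‖-a⁻¹‖ = 1 := by simp [habs_a]
  have hfa : (t1:ℂ) + Complex.I*t2*a ≠ 0 := fne' t1 t2 ht1 ht2 h12 a habs_a
  have hfm : (t1:ℂ) + Complex.I*t2*(-a⁻¹) ≠ 0 := fne' t1 t2 ht1 ht2 h12 _ habs_am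
  have hga : -(t3:ℂ)*a - Complex.I ≠ 0 := gne' t3 ht3 h31 a habs_a
  have hgm : -(t3:ℂ)*(-a⁻¹) - Complex.I ≠ 0 := gne' t3 ht3 h31 _ habs_am
  have hπ : (π:ℂ) ≠ 0 := Complex.ofReal_ne_zero.mpr Real.pi_ne_zero
  have ht2' : (t2:ℂ) ≠ 0 := by exact_mod_cast ht2.ne'
  have ht3' : (t3:ℂ) ≠ 0 := by exact_mod_cast ht3.ne'
  have hbm' : (a:ℂ) + Complex.I*t3 ≠ 0 := by
    intro h
    apply hbm
    have : b⁻¹ + Complex.I*t3*(a⁻¹*b⁻¹) = (a + Complex.I*t3) * (a⁻¹*b⁻¹) := by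
      field_simp
    rw [this, h, zero_mul, neg_zero]
  have h2π : ((2*π:ℝ):ℂ) = 2*(π:ℂ) := by push_cast; ring
  rw [h2π] at *
  have key : -(2 / (π:ℂ)) * ((b - Complex.I*t3*(a*b)) / -(b⁻¹ + Complex.I*t3*(a⁻¹*b⁻¹)))
        * ((a+a⁻¹)/2) * ((b+b⁻¹)/2)
      + (b - Complex.I*t3*(a*b)) * (2*(π:ℂ))⁻¹ *
        ((-(t1+Complex.I*t2*a)*b/t2) / ((t1:ℂ)+Complex.I*t2*a)
          - (-(t1+Complex.I*t2*a)*b/t2) / ((t1:ℂ)+Complex.I*t2*(-a⁻¹))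
          + ((Complex.I*(t3*a+Complex.I)/t3) / (-(t3:ℂ)*(-a⁻¹) - Complex.I)
            - (Complex.I*(t3*a+Complex.I)/t3) / (-(t3:ℂ)*a - Complex.I))) = 0 := by
    have hfm' : (t1:ℂ)*a - Complex.I*t2 ≠ 0 := by
      intro h
      apply hfm
      field_simp
      linear_combination h
    have hgm' : (t3:ℂ) - Complex.I*a ≠ 0 := by
      intro h
      apply hgm
      field_simp
      linear_combination h
    rw [show (t1:ℂ)+Complex.I*t2*(-a⁻¹) = ((t1:ℂ)*a - Complex.I*t2)/a from by
        field_simp; ring,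
      show -(t3:ℂ)*(-a⁻¹) - Complex.I = ((t3:ℂ) - Complex.I*a)/a from by
        field_simp; try ring,
      show -(b⁻¹ + Complex.I*t3*(a⁻¹*b⁻¹)) = -((a + Complex.I*(t3:ℂ))/(a*b)) from by
        field_simp; try ring]
    have hga2 : -((t3:ℂ)*a) - Complex.I ≠ 0 := by simpa [neg_mul] using hga
    have hfa' : (t1:ℂ) + Complex.I*a*t2 ≠ 0 := by rw [mul_right_comm]; exact hfa
    have hfm2 : a*(t1:ℂ) - Complex.I*t2 ≠ 0 := by rw [mul_comm]; exact hfm'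
    field_simp
    linear_combination ((-1:ℂ)*a^2*b^2*(t2:ℂ)*(t3:ℂ)^4*Complex.I^3 + (-1:ℂ)*a^4*b^2*(t2:ℂ)*(t3:ℂ)^4*Complex.I^3 + (-1:ℂ)*a^5*b^3*(t1:ℂ)*(t2:ℂ)*(t3:ℂ)^3*Complex.I + (1:ℂ)*a^4*b^3*(t2:ℂ)^2*(t3:ℂ)^3*Complex.I^2 + (-1:ℂ)*a^5*b*(t1:ℂ)*(t2:ℂ)*(t3:ℂ)^3*Complex.I + (1:ℂ)*a^4*b*(t2:ℂ)^2*(t3:ℂ)^3*Complex.I^2 + (-1:ℂ)*a^3*b^3*(t1:ℂ)*(t2:ℂ)*(t3:ℂ)^3*Complex.I + (1:ℂ)*a^2*b^3*(t2:ℂ)^2*(t3:ℂ)^3*Complex.I^2 + (-1:ℂ)*a^3*b*(t1:ℂ)*(t2:ℂ)*(t3:ℂ)^3*Complex.I + (1:ℂ)*a^2*b*(t2:ℂ)^2*(t3:ℂ)^3*Complex.I^2 + (-1:ℂ)*a^5*b^2*(t2:ℂ)*(t3:ℂ)^3*Complex.I^2 + (-1:ℂ)*a*b^2*(t2:ℂ)*(t3:ℂ)^3*Complex.I^4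 + (-1:ℂ)*a^5*b*(t1:ℂ)*(t2:ℂ)*(t3:ℂ)^3*Complex.I^3 + (-1:ℂ)*a^3*b*(t1:ℂ)*(t2:ℂ)*(t3:ℂ)^3*Complex.I^3 + (1:ℂ)*a^4*b*(t2:ℂ)^2*(t3:ℂ)^3*Complex.I^4 + (1:ℂ)*a^2*b*(t2:ℂ)^2*(t3:ℂ)^3*Complex.I^4 + (1:ℂ)*a*b^2*(t2:ℂ)*(t3:ℂ)^3*Complex.I^2 + (-1:ℂ)*a^3*b^3*(t1:ℂ)*(t2:ℂ)*(t3:ℂ)^3*Complex.I^3 + (-1:ℂ)*a^5*b^3*(t1:ℂ)*(t2:ℂ)*(t3:ℂ)^3*Complex.I^3 + (1:ℂ)*a^2*b^3*(t2:ℂ)^2*(t3:ℂ)^3*Complex.I^4 + (1:ℂ)*a^4*b^3*(t2:ℂ)^2*(t3:ℂ)^3*Complex.I^4 + (-1:ℂ)*a^3*b^2*(t2:ℂ)*(t3:ℂ)^3*Complex.I^4 + (-1:ℂ)*a^6*b^3*(t1:ℂ)*(t2:ℂ)*(t3:ℂ)^2*Complex.I^2 + (1:ℂ)*a^5*b^3*(t2:ℂ)^2*(t3:ℂ)^2*Complex.I^3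 + (-2:ℂ)*a^4*b*(t1:ℂ)*(t2:ℂ)*(t3:ℂ)^2*Complex.I^4 + (-1:ℂ)*a^2*b*(t1:ℂ)*(t2:ℂ)*(t3:ℂ)^2*Complex.I^4 + (2:ℂ)*a^3*b*(t2:ℂ)^2*(t3:ℂ)^2*Complex.I^5 + (1:ℂ)*a*b*(t2:ℂ)^2*(t3:ℂ)^2*Complex.I^5 + (1:ℂ)*a^4*b^3*(t1:ℂ)*(t2:ℂ)*(t3:ℂ)^2 + (-1:ℂ)*a^3*b^3*(t2:ℂ)^2*(t3:ℂ)^2*Complex.I + (1:ℂ)*a^4*b*(t1:ℂ)*(t2:ℂ)*(t3:ℂ)^2 + (-1:ℂ)*a^3*b*(t2:ℂ)^2*(t3:ℂ)^2*Complex.I + (1:ℂ)*a^2*b^3*(t1:ℂ)*(t2:ℂ)*(t3:ℂ)^2 + (-1:ℂ)*a*b^3*(t2:ℂ)^2*(t3:ℂ)^2*Complex.I + (1:ℂ)*a^2*b*(t1:ℂ)*(t2:ℂ)*(t3:ℂ)^2 + (-1:ℂ)*a*b*(t2:ℂ)^2*(t3:ℂ)^2*Complex.I + (1:ℂ)*a^2*b^2*(t2:ℂ)*(t3:ℂ)^2*Complex.I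 + (1:ℂ)*a^4*b^2*(t2:ℂ)*(t3:ℂ)^2*Complex.I + (1:ℂ)*b^2*(t2:ℂ)*(t3:ℂ)^2*Complex.I^3 + (-1:ℂ)*a^4*b^2*(t2:ℂ)*(t3:ℂ)^2*Complex.I^3 + (-1:ℂ)*a^6*b^4*(t1:ℂ)^2*(t2:ℂ)*(t3:ℂ)^2*Complex.I + (2:ℂ)*a^5*b^4*(t1:ℂ)*(t2:ℂ)^2*(t3:ℂ)^2*Complex.I^2 + (-1:ℂ)*a^6*b^2*(t1:ℂ)^2*(t2:ℂ)*(t3:ℂ)^2*Complex.I + (2:ℂ)*a^5*b^2*(t1:ℂ)*(t2:ℂ)^2*(t3:ℂ)^2*Complex.I^2 + (-1:ℂ)*a^4*b^4*(t1:ℂ)^2*(t2:ℂ)*(t3:ℂ)^2*Complex.I + (2:ℂ)*a^3*b^4*(t1:ℂ)*(t2:ℂ)^2*(t3:ℂ)^2*Complex.I^2 + (-1:ℂ)*a^4*b^2*(t1:ℂ)^2*(t2:ℂ)*(t3:ℂ)^2*Complex.I + (2:ℂ)*a^3*b^2*(t1:ℂ)*(t2:ℂ)^2*(t3:ℂ)^2*Complex.I^2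 + (-1:ℂ)*a^2*b^3*(t1:ℂ)*(t2:ℂ)*(t3:ℂ)^2*Complex.I^4 + (-1:ℂ)*a^6*b^2*(t1:ℂ)^2*(t2:ℂ)*(t3:ℂ)^2*Complex.I^3 + (-1:ℂ)*a^4*b^2*(t1:ℂ)^2*(t2:ℂ)*(t3:ℂ)^2*Complex.I^3 + (2:ℂ)*a^5*b^2*(t1:ℂ)*(t2:ℂ)^2*(t3:ℂ)^2*Complex.I^4 + (2:ℂ)*a^3*b^2*(t1:ℂ)*(t2:ℂ)^2*(t3:ℂ)^2*Complex.I^4 + (-1:ℂ)*a^4*b^4*(t1:ℂ)^2*(t2:ℂ)*(t3:ℂ)^2*Complex.I^3 + (-1:ℂ)*a^6*b^4*(t1:ℂ)^2*(t2:ℂ)*(t3:ℂ)^2*Complex.I^3 + (2:ℂ)*a^3*b^4*(t1:ℂ)*(t2:ℂ)^2*(t3:ℂ)^2*Complex.I^4 + (2:ℂ)*a^5*b^4*(t1:ℂ)*(t2:ℂ)^2*(t3:ℂ)^2*Complex.I^4 + (-2:ℂ)*a^4*b^3*(t1:ℂ)*(t2:ℂ)*(t3:ℂ)^2*Complex.I^4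 + (-1:ℂ)*a^4*b^4*(t2:ℂ)^3*(t3:ℂ)^2*Complex.I^3 + (-1:ℂ)*a^4*b^2*(t2:ℂ)^3*(t3:ℂ)^2*Complex.I^3 + (-1:ℂ)*a^2*b^4*(t2:ℂ)^3*(t3:ℂ)^2*Complex.I^3 + (-1:ℂ)*a^2*b^2*(t2:ℂ)^3*(t3:ℂ)^2*Complex.I^3 + (1:ℂ)*a*b^3*(t2:ℂ)^2*(t3:ℂ)^2*Complex.I^5 + (-1:ℂ)*a^4*b^2*(t2:ℂ)^3*(t3:ℂ)^2*Complex.I^5 + (-1:ℂ)*a^2*b^2*(t2:ℂ)^3*(t3:ℂ)^2*Complex.I^5 + (-1:ℂ)*a^2*b^4*(t2:ℂ)^3*(t3:ℂ)^2*Complex.I^5 + (-1:ℂ)*a^4*b^4*(t2:ℂ)^3*(t3:ℂ)^2*Complex.I^5 + (2:ℂ)*a^3*b^3*(t2:ℂ)^2*(t3:ℂ)^2*Complex.I^5 + (-1:ℂ)*a^6*b*(t1:ℂ)*(t2:ℂ)*(t3:ℂ)^2*Complex.I^2 + (1:ℂ)*a^5*b*(t2:ℂ)^2*(t3:ℂ)^2*Complex.I^3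 + (-1:ℂ)*a^4*b^3*(t1:ℂ)*(t2:ℂ)*(t3:ℂ)^2*Complex.I^2 + (1:ℂ)*a^3*b^3*(t2:ℂ)^2*(t3:ℂ)^2*Complex.I^3 + (-1:ℂ)*a^4*b*(t1:ℂ)*(t2:ℂ)*(t3:ℂ)^2*Complex.I^2 + (1:ℂ)*a^3*b*(t2:ℂ)^2*(t3:ℂ)^2*Complex.I^3 + (-1:ℂ)*a^6*b*(t1:ℂ)*(t2:ℂ)*(t3:ℂ)^2*Complex.I^4 + (1:ℂ)*a^5*b*(t2:ℂ)^2*(t3:ℂ)^2*Complex.I^5 + (-1:ℂ)*a^6*b^3*(t1:ℂ)*(t2:ℂ)*(t3:ℂ)^2*Complex.I^4 + (1:ℂ)*a^5*b^3*(t2:ℂ)^2*(t3:ℂ)^2*Complex.I^5 + (-1:ℂ)*a^5*b^3*(t1:ℂ)*(t2:ℂ)*(t3:ℂ)*Complex.I^3 + (1:ℂ)*a^4*b^3*(t2:ℂ)^2*(t3:ℂ)*Complex.I^4 + (1:ℂ)*a^3*b^3*(t1:ℂ)*(t2:ℂ)*(t3:ℂ)*Complex.I^3 + (-1:ℂ)*a^2*b^3*(t2:ℂ)^2*(t3:ℂ)*Complex.I^4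 + (1:ℂ)*a^5*b^3*(t1:ℂ)*(t2:ℂ)*(t3:ℂ)*Complex.I + (-1:ℂ)*a^4*b^3*(t2:ℂ)^2*(t3:ℂ)*Complex.I^2 + (1:ℂ)*a*b^3*(t1:ℂ)*(t2:ℂ)*(t3:ℂ)*Complex.I + (-1:ℂ)*b^3*(t2:ℂ)^2*(t3:ℂ)*Complex.I^2 + (1:ℂ)*a*b*(t1:ℂ)*(t2:ℂ)*(t3:ℂ)*Complex.I + (-1:ℂ)*b*(t2:ℂ)^2*(t3:ℂ)*Complex.I^2 + (1:ℂ)*a*b^2*(t2:ℂ)*(t3:ℂ)*Complex.I^2 + (2:ℂ)*a^3*b*(t1:ℂ)*(t2:ℂ)*(t3:ℂ)*Complex.I + (-2:ℂ)*a^2*b*(t2:ℂ)^2*(t3:ℂ)*Complex.I^2 + (1:ℂ)*a^3*b*(t1:ℂ)*(t2:ℂ)*(t3:ℂ)*Complex.I^3 + (1:ℂ)*a*b*(t1:ℂ)*(t2:ℂ)*(t3:ℂ)*Complex.I^3 + (-1:ℂ)*a^2*b*(t2:ℂ)^2*(t3:ℂ)*Complex.I^4 + (-1:ℂ)*b*(t2:ℂ)^2*(t3:ℂ)*Complex.I^4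 + (-2:ℂ)*a^7*b^4*(t1:ℂ)^2*(t2:ℂ)*(t3:ℂ)*Complex.I^2 + (4:ℂ)*a^6*b^4*(t1:ℂ)*(t2:ℂ)^2*(t3:ℂ)*Complex.I^3 + (-3:ℂ)*a^5*b^2*(t1:ℂ)^2*(t2:ℂ)*(t3:ℂ)*Complex.I^4 + (-1:ℂ)*a^3*b^2*(t1:ℂ)^2*(t2:ℂ)*(t3:ℂ)*Complex.I^4 + (6:ℂ)*a^4*b^2*(t1:ℂ)*(t2:ℂ)^2*(t3:ℂ)*Complex.I^5 + (2:ℂ)*a^2*b^2*(t1:ℂ)*(t2:ℂ)^2*(t3:ℂ)*Complex.I^5 + (1:ℂ)*a^5*b^4*(t1:ℂ)^2*(t2:ℂ)*(t3:ℂ) + (-2:ℂ)*a^4*b^4*(t1:ℂ)*(t2:ℂ)^2*(t3:ℂ)*Complex.I + (1:ℂ)*a^5*b^2*(t1:ℂ)^2*(t2:ℂ)*(t3:ℂ) + (-2:ℂ)*a^4*b^2*(t1:ℂ)*(t2:ℂ)^2*(t3:ℂ)*Complex.I + (1:ℂ)*a^3*b^4*(t1:ℂ)^2*(t2:ℂ)*(t3:ℂ)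 + (-2:ℂ)*a^2*b^4*(t1:ℂ)*(t2:ℂ)^2*(t3:ℂ)*Complex.I + (1:ℂ)*a^3*b^2*(t1:ℂ)^2*(t2:ℂ)*(t3:ℂ) + (-2:ℂ)*a^2*b^2*(t1:ℂ)*(t2:ℂ)^2*(t3:ℂ)*Complex.I + (2:ℂ)*a^3*b^3*(t1:ℂ)*(t2:ℂ)*(t3:ℂ)*Complex.I + (1:ℂ)*a*b^3*(t1:ℂ)*(t2:ℂ)*(t3:ℂ)*Complex.I^3 + (-1:ℂ)*a^7*b^5*(t1:ℂ)^3*(t2:ℂ)*(t3:ℂ)*Complex.I + (3:ℂ)*a^6*b^5*(t1:ℂ)^2*(t2:ℂ)^2*(t3:ℂ)*Complex.I^2 + (-1:ℂ)*a^7*b^3*(t1:ℂ)^3*(t2:ℂ)*(t3:ℂ)*Complex.I + (3:ℂ)*a^6*b^3*(t1:ℂ)^2*(t2:ℂ)^2*(t3:ℂ)*Complex.I^2 + (-1:ℂ)*a^5*b^5*(t1:ℂ)^3*(t2:ℂ)*(t3:ℂ)*Complex.I + (3:ℂ)*a^4*b^5*(t1:ℂ)^2*(t2:ℂ)^2*(t3:ℂ)*Complex.I^2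 + (-1:ℂ)*a^5*b^3*(t1:ℂ)^3*(t2:ℂ)*(t3:ℂ)*Complex.I + (3:ℂ)*a^4*b^3*(t1:ℂ)^2*(t2:ℂ)^2*(t3:ℂ)*Complex.I^2 + (-1:ℂ)*a^3*b^4*(t1:ℂ)^2*(t2:ℂ)*(t3:ℂ)*Complex.I^4 + (-1:ℂ)*a^7*b^3*(t1:ℂ)^3*(t2:ℂ)*(t3:ℂ)*Complex.I^3 + (-1:ℂ)*a^5*b^3*(t1:ℂ)^3*(t2:ℂ)*(t3:ℂ)*Complex.I^3 + (3:ℂ)*a^6*b^3*(t1:ℂ)^2*(t2:ℂ)^2*(t3:ℂ)*Complex.I^4 + (3:ℂ)*a^4*b^3*(t1:ℂ)^2*(t2:ℂ)^2*(t3:ℂ)*Complex.I^4 + (-1:ℂ)*a^5*b^5*(t1:ℂ)^3*(t2:ℂ)*(t3:ℂ)*Complex.I^3 + (-1:ℂ)*a^7*b^5*(t1:ℂ)^3*(t2:ℂ)*(t3:ℂ)*Complex.I^3 + (3:ℂ)*a^4*b^5*(t1:ℂ)^2*(t2:ℂ)^2*(t3:ℂ)*Complex.I^4 + (3:ℂ)*a^6*b^5*(t1:ℂ)^2*(t2:ℂ)^2*(t3:ℂ)*Complex.I^4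 + (-3:ℂ)*a^5*b^4*(t1:ℂ)^2*(t2:ℂ)*(t3:ℂ)*Complex.I^4 + (-3:ℂ)*a^5*b^5*(t1:ℂ)*(t2:ℂ)^3*(t3:ℂ)*Complex.I^3 + (-3:ℂ)*a^5*b^3*(t1:ℂ)*(t2:ℂ)^3*(t3:ℂ)*Complex.I^3 + (-3:ℂ)*a^3*b^5*(t1:ℂ)*(t2:ℂ)^3*(t3:ℂ)*Complex.I^3 + (-3:ℂ)*a^3*b^3*(t1:ℂ)*(t2:ℂ)^3*(t3:ℂ)*Complex.I^3 + (2:ℂ)*a^2*b^4*(t1:ℂ)*(t2:ℂ)^2*(t3:ℂ)*Complex.I^5 + (-3:ℂ)*a^5*b^3*(t1:ℂ)*(t2:ℂ)^3*(t3:ℂ)*Complex.I^5 + (-3:ℂ)*a^3*b^3*(t1:ℂ)*(t2:ℂ)^3*(t3:ℂ)*Complex.I^5 + (-3:ℂ)*a^3*b^5*(t1:ℂ)*(t2:ℂ)^3*(t3:ℂ)*Complex.I^5 + (-3:ℂ)*a^5*b^5*(t1:ℂ)*(t2:ℂ)^3*(t3:ℂ)*Complex.I^5 + (6:ℂ)*a^4*b^4*(t1:ℂ)*(t2:ℂ)^2*(t3:ℂ)*Complex.I^5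 + (-2:ℂ)*a^7*b^2*(t1:ℂ)^2*(t2:ℂ)*(t3:ℂ)*Complex.I^2 + (4:ℂ)*a^6*b^2*(t1:ℂ)*(t2:ℂ)^2*(t3:ℂ)*Complex.I^3 + (-2:ℂ)*a^5*b^4*(t1:ℂ)^2*(t2:ℂ)*(t3:ℂ)*Complex.I^2 + (4:ℂ)*a^4*b^4*(t1:ℂ)*(t2:ℂ)^2*(t3:ℂ)*Complex.I^3 + (-2:ℂ)*a^5*b^2*(t1:ℂ)^2*(t2:ℂ)*(t3:ℂ)*Complex.I^2 + (4:ℂ)*a^4*b^2*(t1:ℂ)*(t2:ℂ)^2*(t3:ℂ)*Complex.I^3 + (-2:ℂ)*a^7*b^2*(t1:ℂ)^2*(t2:ℂ)*(t3:ℂ)*Complex.I^4 + (4:ℂ)*a^6*b^2*(t1:ℂ)*(t2:ℂ)^2*(t3:ℂ)*Complex.I^5 + (-2:ℂ)*a^7*b^4*(t1:ℂ)^2*(t2:ℂ)*(t3:ℂ)*Complex.I^4 + (4:ℂ)*a^6*b^4*(t1:ℂ)*(t2:ℂ)^2*(t3:ℂ)*Complex.I^5 + (-2:ℂ)*a^5*b^4*(t2:ℂ)^3*(t3:ℂ)*Complex.I^4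 + (-3:ℂ)*a^3*b^2*(t2:ℂ)^3*(t3:ℂ)*Complex.I^6 + (-1:ℂ)*a*b^2*(t2:ℂ)^3*(t3:ℂ)*Complex.I^6 + (1:ℂ)*a^3*b^4*(t2:ℂ)^3*(t3:ℂ)*Complex.I^2 + (1:ℂ)*a^3*b^2*(t2:ℂ)^3*(t3:ℂ)*Complex.I^2 + (1:ℂ)*a*b^4*(t2:ℂ)^3*(t3:ℂ)*Complex.I^2 + (1:ℂ)*a*b^2*(t2:ℂ)^3*(t3:ℂ)*Complex.I^2 + (-2:ℂ)*a^2*b^3*(t2:ℂ)^2*(t3:ℂ)*Complex.I^2 + (-1:ℂ)*b^3*(t2:ℂ)^2*(t3:ℂ)*Complex.I^4 + (1:ℂ)*a^4*b^5*(t2:ℂ)^4*(t3:ℂ)*Complex.I^4 + (1:ℂ)*a^4*b^3*(t2:ℂ)^4*(t3:ℂ)*Complex.I^4 + (1:ℂ)*a^2*b^5*(t2:ℂ)^4*(t3:ℂ)*Complex.I^4 + (1:ℂ)*a^2*b^3*(t2:ℂ)^4*(t3:ℂ)*Complex.I^4 + (-1:ℂ)*a*b^4*(t2:ℂ)^3*(t3:ℂ)*Complex.I^6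 + (1:ℂ)*a^4*b^3*(t2:ℂ)^4*(t3:ℂ)*Complex.I^6 + (1:ℂ)*a^2*b^3*(t2:ℂ)^4*(t3:ℂ)*Complex.I^6 + (1:ℂ)*a^2*b^5*(t2:ℂ)^4*(t3:ℂ)*Complex.I^6 + (1:ℂ)*a^4*b^5*(t2:ℂ)^4*(t3:ℂ)*Complex.I^6 + (-3:ℂ)*a^3*b^4*(t2:ℂ)^3*(t3:ℂ)*Complex.I^6 + (-2:ℂ)*a^5*b^2*(t2:ℂ)^3*(t3:ℂ)*Complex.I^4 + (-2:ℂ)*a^3*b^4*(t2:ℂ)^3*(t3:ℂ)*Complex.I^4 + (-2:ℂ)*a^3*b^2*(t2:ℂ)^3*(t3:ℂ)*Complex.I^4 + (-2:ℂ)*a^5*b^2*(t2:ℂ)^3*(t3:ℂ)*Complex.I^6 + (-2:ℂ)*a^5*b^4*(t2:ℂ)^3*(t3:ℂ)*Complex.I^6 + (-1:ℂ)*a^7*b^3*(t1:ℂ)*(t2:ℂ)*(t3:ℂ)*Complex.I^3 + (1:ℂ)*a^6*b^3*(t2:ℂ)^2*(t3:ℂ)*Complex.I^4 + (-2:ℂ)*a^5*b*(t1:ℂ)*(t2:ℂ)*(t3:ℂ)*Complex.I^5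 + (-1:ℂ)*a^3*b*(t1:ℂ)*(t2:ℂ)*(t3:ℂ)*Complex.I^5 + (2:ℂ)*a^4*b*(t2:ℂ)^2*(t3:ℂ)*Complex.I^6 + (1:ℂ)*a^2*b*(t2:ℂ)^2*(t3:ℂ)*Complex.I^6 + (1:ℂ)*a^5*b*(t1:ℂ)*(t2:ℂ)*(t3:ℂ)*Complex.I + (-1:ℂ)*a^4*b*(t2:ℂ)^2*(t3:ℂ)*Complex.I^2 + (1:ℂ)*a^3*b^2*(t2:ℂ)*(t3:ℂ)*Complex.I^2 + (-1:ℂ)*a^3*b^3*(t1:ℂ)*(t2:ℂ)*(t3:ℂ)*Complex.I^5 + (-2:ℂ)*a^5*b^3*(t1:ℂ)*(t2:ℂ)*(t3:ℂ)*Complex.I^5 + (1:ℂ)*a^2*b^3*(t2:ℂ)^2*(t3:ℂ)*Complex.I^6 + (2:ℂ)*a^4*b^3*(t2:ℂ)^2*(t3:ℂ)*Complex.I^6 + (-1:ℂ)*a^7*b*(t1:ℂ)*(t2:ℂ)*(t3:ℂ)*Complex.I^3 + (1:ℂ)*a^6*b*(t2:ℂ)^2*(t3:ℂ)*Complex.I^4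 + (-1:ℂ)*a^5*b*(t1:ℂ)*(t2:ℂ)*(t3:ℂ)*Complex.I^3 + (1:ℂ)*a^4*b*(t2:ℂ)^2*(t3:ℂ)*Complex.I^4 + (-1:ℂ)*a^7*b*(t1:ℂ)*(t2:ℂ)*(t3:ℂ)*Complex.I^5 + (1:ℂ)*a^6*b*(t2:ℂ)^2*(t3:ℂ)*Complex.I^6 + (-1:ℂ)*a^7*b^3*(t1:ℂ)*(t2:ℂ)*(t3:ℂ)*Complex.I^5 + (1:ℂ)*a^6*b^3*(t2:ℂ)^2*(t3:ℂ)*Complex.I^6 + (2:ℂ)*a^4*b^3*(t1:ℂ)*(t2:ℂ)*Complex.I^2 + (-2:ℂ)*a^3*b^3*(t2:ℂ)^2*Complex.I^3 + (1:ℂ)*a^2*b^3*(t1:ℂ)*(t2:ℂ)*Complex.I^2 + (-1:ℂ)*a*b^3*(t2:ℂ)^2*Complex.I^3 + (-3:ℂ)*a^6*b^4*(t1:ℂ)^2*(t2:ℂ)*Complex.I^3 + (6:ℂ)*a^5*b^4*(t1:ℂ)*(t2:ℂ)^2*Complex.I^4 + (1:ℂ)*a^4*b^4*(t1:ℂ)^2*(t2:ℂ)*Complex.I^3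 + (-2:ℂ)*a^3*b^4*(t1:ℂ)*(t2:ℂ)^2*Complex.I^4 + (2:ℂ)*a^6*b^4*(t1:ℂ)^2*(t2:ℂ)*Complex.I + (-4:ℂ)*a^5*b^4*(t1:ℂ)*(t2:ℂ)^2*Complex.I^2 + (1:ℂ)*a^2*b^4*(t1:ℂ)^2*(t2:ℂ)*Complex.I + (-2:ℂ)*a*b^4*(t1:ℂ)*(t2:ℂ)^2*Complex.I^2 + (1:ℂ)*a^2*b^2*(t1:ℂ)^2*(t2:ℂ)*Complex.I + (-2:ℂ)*a*b^2*(t1:ℂ)*(t2:ℂ)^2*Complex.I^2 + (3:ℂ)*a^4*b^2*(t1:ℂ)^2*(t2:ℂ)*Complex.I + (-6:ℂ)*a^3*b^2*(t1:ℂ)*(t2:ℂ)^2*Complex.I^2 + (1:ℂ)*a^4*b^2*(t1:ℂ)^2*(t2:ℂ)*Complex.I^3 + (1:ℂ)*a^2*b^2*(t1:ℂ)^2*(t2:ℂ)*Complex.I^3 + (-2:ℂ)*a^3*b^2*(t1:ℂ)*(t2:ℂ)^2*Complex.I^4 + (-2:ℂ)*a*b^2*(t1:ℂ)*(t2:ℂ)^2*Complex.I^4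 + (-3:ℂ)*a^8*b^5*(t1:ℂ)^3*(t2:ℂ)*Complex.I^2 + (9:ℂ)*a^7*b^5*(t1:ℂ)^2*(t2:ℂ)^2*Complex.I^3 + (-4:ℂ)*a^6*b^3*(t1:ℂ)^3*(t2:ℂ)*Complex.I^4 + (-1:ℂ)*a^4*b^3*(t1:ℂ)^3*(t2:ℂ)*Complex.I^4 + (12:ℂ)*a^5*b^3*(t1:ℂ)^2*(t2:ℂ)^2*Complex.I^5 + (3:ℂ)*a^3*b^3*(t1:ℂ)^2*(t2:ℂ)^2*Complex.I^5 + (1:ℂ)*a^6*b^5*(t1:ℂ)^3*(t2:ℂ) + (-3:ℂ)*a^5*b^5*(t1:ℂ)^2*(t2:ℂ)^2*Complex.I + (1:ℂ)*a^6*b^3*(t1:ℂ)^3*(t2:ℂ) + (-3:ℂ)*a^5*b^3*(t1:ℂ)^2*(t2:ℂ)^2*Complex.I + (1:ℂ)*a^4*b^5*(t1:ℂ)^3*(t2:ℂ) + (-3:ℂ)*a^3*b^5*(t1:ℂ)^2*(t2:ℂ)^2*Complex.I + (1:ℂ)*a^4*b^3*(t1:ℂ)^3*(t2:ℂ) + (-3:ℂ)*a^3*b^3*(t1:ℂ)^2*(t2:ℂ)^2*Complex.I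 + (3:ℂ)*a^4*b^4*(t1:ℂ)^2*(t2:ℂ)*Complex.I + (1:ℂ)*a^2*b^4*(t1:ℂ)^2*(t2:ℂ)*Complex.I^3 + (-1:ℂ)*a^8*b^6*(t1:ℂ)^4*(t2:ℂ)*Complex.I + (4:ℂ)*a^7*b^6*(t1:ℂ)^3*(t2:ℂ)^2*Complex.I^2 + (-1:ℂ)*a^8*b^4*(t1:ℂ)^4*(t2:ℂ)*Complex.I + (4:ℂ)*a^7*b^4*(t1:ℂ)^3*(t2:ℂ)^2*Complex.I^2 + (-1:ℂ)*a^6*b^6*(t1:ℂ)^4*(t2:ℂ)*Complex.I + (4:ℂ)*a^5*b^6*(t1:ℂ)^3*(t2:ℂ)^2*Complex.I^2 + (-1:ℂ)*a^6*b^4*(t1:ℂ)^4*(t2:ℂ)*Complex.I + (4:ℂ)*a^5*b^4*(t1:ℂ)^3*(t2:ℂ)^2*Complex.I^2 + (-1:ℂ)*a^4*b^5*(t1:ℂ)^3*(t2:ℂ)*Complex.I^4 + (-1:ℂ)*a^8*b^4*(t1:ℂ)^4*(t2:ℂ)*Complex.I^3 + (-1:ℂ)*a^6*b^4*(t1:ℂ)^4*(t2:ℂ)*Complex.I^3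 + (4:ℂ)*a^7*b^4*(t1:ℂ)^3*(t2:ℂ)^2*Complex.I^4 + (4:ℂ)*a^5*b^4*(t1:ℂ)^3*(t2:ℂ)^2*Complex.I^4 + (-1:ℂ)*a^6*b^6*(t1:ℂ)^4*(t2:ℂ)*Complex.I^3 + (-1:ℂ)*a^8*b^6*(t1:ℂ)^4*(t2:ℂ)*Complex.I^3 + (4:ℂ)*a^5*b^6*(t1:ℂ)^3*(t2:ℂ)^2*Complex.I^4 + (4:ℂ)*a^7*b^6*(t1:ℂ)^3*(t2:ℂ)^2*Complex.I^4 + (-4:ℂ)*a^6*b^5*(t1:ℂ)^3*(t2:ℂ)*Complex.I^4 + (-6:ℂ)*a^6*b^6*(t1:ℂ)^2*(t2:ℂ)^3*Complex.I^3 + (-6:ℂ)*a^6*b^4*(t1:ℂ)^2*(t2:ℂ)^3*Complex.I^3 + (-6:ℂ)*a^4*b^6*(t1:ℂ)^2*(t2:ℂ)^3*Complex.I^3 + (-6:ℂ)*a^4*b^4*(t1:ℂ)^2*(t2:ℂ)^3*Complex.I^3 + (3:ℂ)*a^3*b^5*(t1:ℂ)^2*(t2:ℂ)^2*Complex.I^5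 + (-6:ℂ)*a^6*b^4*(t1:ℂ)^2*(t2:ℂ)^3*Complex.I^5 + (-6:ℂ)*a^4*b^4*(t1:ℂ)^2*(t2:ℂ)^3*Complex.I^5 + (-6:ℂ)*a^4*b^6*(t1:ℂ)^2*(t2:ℂ)^3*Complex.I^5 + (-6:ℂ)*a^6*b^6*(t1:ℂ)^2*(t2:ℂ)^3*Complex.I^5 + (12:ℂ)*a^5*b^5*(t1:ℂ)^2*(t2:ℂ)^2*Complex.I^5 + (-3:ℂ)*a^8*b^3*(t1:ℂ)^3*(t2:ℂ)*Complex.I^2 + (9:ℂ)*a^7*b^3*(t1:ℂ)^2*(t2:ℂ)^2*Complex.I^3 + (-3:ℂ)*a^6*b^5*(t1:ℂ)^3*(t2:ℂ)*Complex.I^2 + (9:ℂ)*a^5*b^5*(t1:ℂ)^2*(t2:ℂ)^2*Complex.I^3 + (-3:ℂ)*a^6*b^3*(t1:ℂ)^3*(t2:ℂ)*Complex.I^2 + (9:ℂ)*a^5*b^3*(t1:ℂ)^2*(t2:ℂ)^2*Complex.I^3 + (-3:ℂ)*a^8*b^3*(t1:ℂ)^3*(t2:ℂ)*Complex.I^4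 + (9:ℂ)*a^7*b^3*(t1:ℂ)^2*(t2:ℂ)^2*Complex.I^5 + (-3:ℂ)*a^8*b^5*(t1:ℂ)^3*(t2:ℂ)*Complex.I^4 + (9:ℂ)*a^7*b^5*(t1:ℂ)^2*(t2:ℂ)^2*Complex.I^5 + (-9:ℂ)*a^6*b^5*(t1:ℂ)*(t2:ℂ)^3*Complex.I^4 + (-12:ℂ)*a^4*b^3*(t1:ℂ)*(t2:ℂ)^3*Complex.I^6 + (-3:ℂ)*a^2*b^3*(t1:ℂ)*(t2:ℂ)^3*Complex.I^6 + (3:ℂ)*a^4*b^5*(t1:ℂ)*(t2:ℂ)^3*Complex.I^2 + (3:ℂ)*a^4*b^3*(t1:ℂ)*(t2:ℂ)^3*Complex.I^2 + (3:ℂ)*a^2*b^5*(t1:ℂ)*(t2:ℂ)^3*Complex.I^2 + (3:ℂ)*a^2*b^3*(t1:ℂ)*(t2:ℂ)^3*Complex.I^2 + (-6:ℂ)*a^3*b^4*(t1:ℂ)*(t2:ℂ)^2*Complex.I^2 + (-2:ℂ)*a*b^4*(t1:ℂ)*(t2:ℂ)^2*Complex.I^4 + (4:ℂ)*a^5*b^6*(t1:ℂ)*(t2:ℂ)^4*Complex.I^4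 + (4:ℂ)*a^5*b^4*(t1:ℂ)*(t2:ℂ)^4*Complex.I^4 + (4:ℂ)*a^3*b^6*(t1:ℂ)*(t2:ℂ)^4*Complex.I^4 + (4:ℂ)*a^3*b^4*(t1:ℂ)*(t2:ℂ)^4*Complex.I^4 + (-3:ℂ)*a^2*b^5*(t1:ℂ)*(t2:ℂ)^3*Complex.I^6 + (4:ℂ)*a^5*b^4*(t1:ℂ)*(t2:ℂ)^4*Complex.I^6 + (4:ℂ)*a^3*b^4*(t1:ℂ)*(t2:ℂ)^4*Complex.I^6 + (4:ℂ)*a^3*b^6*(t1:ℂ)*(t2:ℂ)^4*Complex.I^6 + (4:ℂ)*a^5*b^6*(t1:ℂ)*(t2:ℂ)^4*Complex.I^6 + (-12:ℂ)*a^4*b^5*(t1:ℂ)*(t2:ℂ)^3*Complex.I^6 + (-9:ℂ)*a^6*b^3*(t1:ℂ)*(t2:ℂ)^3*Complex.I^4 + (-9:ℂ)*a^4*b^5*(t1:ℂ)*(t2:ℂ)^3*Complex.I^4 + (-9:ℂ)*a^4*b^3*(t1:ℂ)*(t2:ℂ)^3*Complex.I^4 + (-9:ℂ)*a^6*b^3*(t1:ℂ)*(t2:ℂ)^3*Complex.I^6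 + (-9:ℂ)*a^6*b^5*(t1:ℂ)*(t2:ℂ)^3*Complex.I^6 + (-3:ℂ)*a^8*b^4*(t1:ℂ)^2*(t2:ℂ)*Complex.I^3 + (6:ℂ)*a^7*b^4*(t1:ℂ)*(t2:ℂ)^2*Complex.I^4 + (-5:ℂ)*a^6*b^2*(t1:ℂ)^2*(t2:ℂ)*Complex.I^5 + (-2:ℂ)*a^4*b^2*(t1:ℂ)^2*(t2:ℂ)*Complex.I^5 + (10:ℂ)*a^5*b^2*(t1:ℂ)*(t2:ℂ)^2*Complex.I^6 + (4:ℂ)*a^3*b^2*(t1:ℂ)*(t2:ℂ)^2*Complex.I^6 + (2:ℂ)*a^6*b^2*(t1:ℂ)^2*(t2:ℂ)*Complex.I + (-4:ℂ)*a^5*b^2*(t1:ℂ)*(t2:ℂ)^2*Complex.I^2 + (-2:ℂ)*a^4*b^4*(t1:ℂ)^2*(t2:ℂ)*Complex.I^5 + (-5:ℂ)*a^6*b^4*(t1:ℂ)^2*(t2:ℂ)*Complex.I^5 + (4:ℂ)*a^3*b^4*(t1:ℂ)*(t2:ℂ)^2*Complex.I^6 + (10:ℂ)*a^5*b^4*(t1:ℂ)*(t2:ℂ)^2*Complex.I^6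 + (-3:ℂ)*a^8*b^2*(t1:ℂ)^2*(t2:ℂ)*Complex.I^3 + (6:ℂ)*a^7*b^2*(t1:ℂ)*(t2:ℂ)^2*Complex.I^4 + (-3:ℂ)*a^6*b^2*(t1:ℂ)^2*(t2:ℂ)*Complex.I^3 + (6:ℂ)*a^5*b^2*(t1:ℂ)*(t2:ℂ)^2*Complex.I^4 + (-3:ℂ)*a^8*b^2*(t1:ℂ)^2*(t2:ℂ)*Complex.I^5 + (6:ℂ)*a^7*b^2*(t1:ℂ)*(t2:ℂ)^2*Complex.I^6 + (-3:ℂ)*a^8*b^4*(t1:ℂ)^2*(t2:ℂ)*Complex.I^5 + (6:ℂ)*a^7*b^4*(t1:ℂ)*(t2:ℂ)^2*Complex.I^6 + (-3:ℂ)*a^4*b^4*(t2:ℂ)^3*Complex.I^5 + (1:ℂ)*a^2*b^4*(t2:ℂ)^3*Complex.I^5 + (2:ℂ)*a^4*b^4*(t2:ℂ)^3*Complex.I^3 + (1:ℂ)*b^4*(t2:ℂ)^3*Complex.I^3 + (1:ℂ)*b^2*(t2:ℂ)^3*Complex.I^3 + (3:ℂ)*a^2*b^2*(t2:ℂ)^3*Complex.I^3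 + (1:ℂ)*a^2*b^2*(t2:ℂ)^3*Complex.I^5 + (1:ℂ)*b^2*(t2:ℂ)^3*Complex.I^5 + (3:ℂ)*a^5*b^5*(t2:ℂ)^4*Complex.I^5 + (4:ℂ)*a^3*b^3*(t2:ℂ)^4*Complex.I^7 + (1:ℂ)*a*b^3*(t2:ℂ)^4*Complex.I^7 + (-1:ℂ)*a^3*b^5*(t2:ℂ)^4*Complex.I^3 + (-1:ℂ)*a^3*b^3*(t2:ℂ)^4*Complex.I^3 + (-1:ℂ)*a*b^5*(t2:ℂ)^4*Complex.I^3 + (-1:ℂ)*a*b^3*(t2:ℂ)^4*Complex.I^3 + (3:ℂ)*a^2*b^4*(t2:ℂ)^3*Complex.I^3 + (1:ℂ)*b^4*(t2:ℂ)^3*Complex.I^5 + (-1:ℂ)*a^4*b^6*(t2:ℂ)^5*Complex.I^5 + (-1:ℂ)*a^4*b^4*(t2:ℂ)^5*Complex.I^5 + (-1:ℂ)*a^2*b^6*(t2:ℂ)^5*Complex.I^5 + (-1:ℂ)*a^2*b^4*(t2:ℂ)^5*Complex.I^5 + (1:ℂ)*a*b^5*(t2:ℂ)^4*Complex.I^7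 + (-1:ℂ)*a^4*b^4*(t2:ℂ)^5*Complex.I^7 + (-1:ℂ)*a^2*b^4*(t2:ℂ)^5*Complex.I^7 + (-1:ℂ)*a^2*b^6*(t2:ℂ)^5*Complex.I^7 + (-1:ℂ)*a^4*b^6*(t2:ℂ)^5*Complex.I^7 + (4:ℂ)*a^3*b^5*(t2:ℂ)^4*Complex.I^7 + (3:ℂ)*a^5*b^3*(t2:ℂ)^4*Complex.I^5 + (3:ℂ)*a^3*b^5*(t2:ℂ)^4*Complex.I^5 + (3:ℂ)*a^3*b^3*(t2:ℂ)^4*Complex.I^5 + (3:ℂ)*a^5*b^3*(t2:ℂ)^4*Complex.I^7 + (3:ℂ)*a^5*b^5*(t2:ℂ)^4*Complex.I^7 + (-3:ℂ)*a^6*b^4*(t2:ℂ)^3*Complex.I^5 + (-5:ℂ)*a^4*b^2*(t2:ℂ)^3*Complex.I^7 + (-2:ℂ)*a^2*b^2*(t2:ℂ)^3*Complex.I^7 + (2:ℂ)*a^4*b^2*(t2:ℂ)^3*Complex.I^3 + (-2:ℂ)*a^2*b^4*(t2:ℂ)^3*Complex.I^7 + (-5:ℂ)*a^4*b^4*(t2:ℂ)^3*Complex.I^7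 + (-3:ℂ)*a^6*b^2*(t2:ℂ)^3*Complex.I^5 + (-3:ℂ)*a^4*b^2*(t2:ℂ)^3*Complex.I^5 + (-3:ℂ)*a^6*b^2*(t2:ℂ)^3*Complex.I^7 + (-3:ℂ)*a^6*b^4*(t2:ℂ)^3*Complex.I^7 + (-1:ℂ)*a^6*b^3*(t1:ℂ)*(t2:ℂ)*Complex.I^4 + (1:ℂ)*a^5*b^3*(t2:ℂ)^2*Complex.I^5 + (1:ℂ)*a^4*b^3*(t1:ℂ)*(t2:ℂ)*Complex.I^4 + (-1:ℂ)*a^3*b^3*(t2:ℂ)^2*Complex.I^5 + (1:ℂ)*a^6*b^3*(t1:ℂ)*(t2:ℂ)*Complex.I^2 + (-1:ℂ)*a^5*b^3*(t2:ℂ)^2*Complex.I^3 + (1:ℂ)*a^2*b*(t1:ℂ)*(t2:ℂ)*Complex.I^2 + (-1:ℂ)*a*b*(t2:ℂ)^2*Complex.I^3 + (2:ℂ)*a^4*b*(t1:ℂ)*(t2:ℂ)*Complex.I^2 + (-2:ℂ)*a^3*b*(t2:ℂ)^2*Complex.I^3 + (1:ℂ)*a^4*b*(t1:ℂ)*(t2:ℂ)*Complex.I^4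 + (1:ℂ)*a^2*b*(t1:ℂ)*(t2:ℂ)*Complex.I^4 + (-1:ℂ)*a^3*b*(t2:ℂ)^2*Complex.I^5 + (-1:ℂ)*a*b*(t2:ℂ)^2*Complex.I^5 + (1:ℂ)*a^2*b^3*(t1:ℂ)*(t2:ℂ)*Complex.I^4 + (-1:ℂ)*a*b^3*(t2:ℂ)^2*Complex.I^5 + (-1:ℂ)*a^8*b^3*(t1:ℂ)*(t2:ℂ)*Complex.I^4 + (1:ℂ)*a^7*b^3*(t2:ℂ)^2*Complex.I^5 + (-2:ℂ)*a^6*b*(t1:ℂ)*(t2:ℂ)*Complex.I^6 + (-1:ℂ)*a^4*b*(t1:ℂ)*(t2:ℂ)*Complex.I^6 + (2:ℂ)*a^5*b*(t2:ℂ)^2*Complex.I^7 + (1:ℂ)*a^3*b*(t2:ℂ)^2*Complex.I^7 + (1:ℂ)*a^6*b*(t1:ℂ)*(t2:ℂ)*Complex.I^2 + (-1:ℂ)*a^5*b*(t2:ℂ)^2*Complex.I^3 + (-1:ℂ)*a^4*b^3*(t1:ℂ)*(t2:ℂ)*Complex.I^6 + (-2:ℂ)*a^6*b^3*(t1:ℂ)*(t2:ℂ)*Complex.I^6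 + (1:ℂ)*a^3*b^3*(t2:ℂ)^2*Complex.I^7 + (2:ℂ)*a^5*b^3*(t2:ℂ)^2*Complex.I^7 + (-1:ℂ)*a^8*b*(t1:ℂ)*(t2:ℂ)*Complex.I^4 + (1:ℂ)*a^7*b*(t2:ℂ)^2*Complex.I^5 + (-1:ℂ)*a^6*b*(t1:ℂ)*(t2:ℂ)*Complex.I^4 + (1:ℂ)*a^5*b*(t2:ℂ)^2*Complex.I^5 + (-1:ℂ)*a^8*b*(t1:ℂ)*(t2:ℂ)*Complex.I^6 + (1:ℂ)*a^7*b*(t2:ℂ)^2*Complex.I^7 + (-1:ℂ)*a^8*b^3*(t1:ℂ)*(t2:ℂ)*Complex.I^6 + (1:ℂ)*a^7*b^3*(t2:ℂ)^2*Complex.I^7) * hz2 + ((5:ℂ)*a^3*b^4*(t2:ℂ)^5*Complex.I^6 + (1:ℂ)*a*b^4*(t2:ℂ)^5*Complex.I^6 + (1:ℂ)*a*b^6*(t2:ℂ)^5*Complex.I^6 + (-1:ℂ)*a^4*b^5*(t2:ℂ)^6*Complex.I^6 + (-1:ℂ)*a^2*b^5*(t2:ℂ)^6*Complex.I^6 +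 (-1:ℂ)*a^2*b^7*(t2:ℂ)^6*Complex.I^6 + (-1:ℂ)*a^4*b^7*(t2:ℂ)^6*Complex.I^6 + (5:ℂ)*a^3*b^6*(t2:ℂ)^5*Complex.I^6 + (4:ℂ)*a^5*b^4*(t2:ℂ)^5*Complex.I^6 + (4:ℂ)*a^5*b^6*(t2:ℂ)^5*Complex.I^6 + (-9:ℂ)*a^4*b^3*(t2:ℂ)^4*Complex.I^6 + (-3:ℂ)*a^2*b^3*(t2:ℂ)^4*Complex.I^6 + (-3:ℂ)*a^2*b^5*(t2:ℂ)^4*Complex.I^6 + (-9:ℂ)*a^4*b^5*(t2:ℂ)^4*Complex.I^6 + (-6:ℂ)*a^6*b^3*(t2:ℂ)^4*Complex.I^6 + (-6:ℂ)*a^6*b^5*(t2:ℂ)^4*Complex.I^6 + (7:ℂ)*a^5*b^2*(t2:ℂ)^3*Complex.I^6 + (3:ℂ)*a^3*b^2*(t2:ℂ)^3*Complex.I^6 + (3:ℂ)*a^3*b^4*(t2:ℂ)^3*Complex.I^6 + (7:ℂ)*a^5*b^4*(t2:ℂ)^3*Complex.I^6 + (4:ℂ)*a^7*b^2*(t2:ℂ)^3*Complex.I^6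 + (4:ℂ)*a^7*b^4*(t2:ℂ)^3*Complex.I^6 + (-2:ℂ)*a^6*b*(t2:ℂ)^2*Complex.I^6 + (-1:ℂ)*a^4*b*(t2:ℂ)^2*Complex.I^6 + (-1:ℂ)*a^4*b^3*(t2:ℂ)^2*Complex.I^6 + (-2:ℂ)*a^6*b^3*(t2:ℂ)^2*Complex.I^6 + (-1:ℂ)*a^8*b*(t2:ℂ)^2*Complex.I^6 + (-1:ℂ)*a^8*b^3*(t2:ℂ)^2*Complex.I^6 + (-20:ℂ)*a^4*b^4*(t1:ℂ)*(t2:ℂ)^4*Complex.I^5 + (-4:ℂ)*a^2*b^4*(t1:ℂ)*(t2:ℂ)^4*Complex.I^5 + (-4:ℂ)*a^2*b^6*(t1:ℂ)*(t2:ℂ)^4*Complex.I^5 + (5:ℂ)*a^5*b^5*(t1:ℂ)*(t2:ℂ)^5*Complex.I^5 + (5:ℂ)*a^3*b^5*(t1:ℂ)*(t2:ℂ)^5*Complex.I^5 + (5:ℂ)*a^3*b^7*(t1:ℂ)*(t2:ℂ)^5*Complex.I^5 + (5:ℂ)*a^5*b^7*(t1:ℂ)*(t2:ℂ)^5*Complex.I^5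 + (-20:ℂ)*a^4*b^6*(t1:ℂ)*(t2:ℂ)^4*Complex.I^5 + (-16:ℂ)*a^6*b^4*(t1:ℂ)*(t2:ℂ)^4*Complex.I^5 + (-16:ℂ)*a^6*b^6*(t1:ℂ)*(t2:ℂ)^4*Complex.I^5 + (27:ℂ)*a^5*b^3*(t1:ℂ)*(t2:ℂ)^3*Complex.I^5 + (9:ℂ)*a^3*b^3*(t1:ℂ)*(t2:ℂ)^3*Complex.I^5 + (9:ℂ)*a^3*b^5*(t1:ℂ)*(t2:ℂ)^3*Complex.I^5 + (27:ℂ)*a^5*b^5*(t1:ℂ)*(t2:ℂ)^3*Complex.I^5 + (18:ℂ)*a^7*b^3*(t1:ℂ)*(t2:ℂ)^3*Complex.I^5 + (18:ℂ)*a^7*b^5*(t1:ℂ)*(t2:ℂ)^3*Complex.I^5 + (-14:ℂ)*a^6*b^2*(t1:ℂ)*(t2:ℂ)^2*Complex.I^5 + (-6:ℂ)*a^4*b^2*(t1:ℂ)*(t2:ℂ)^2*Complex.I^5 + (-6:ℂ)*a^4*b^4*(t1:ℂ)*(t2:ℂ)^2*Complex.I^5 + (-14:ℂ)*a^6*b^4*(t1:ℂ)*(t2:ℂ)^2*Complex.I^5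 + (-8:ℂ)*a^8*b^2*(t1:ℂ)*(t2:ℂ)^2*Complex.I^5 + (-8:ℂ)*a^8*b^4*(t1:ℂ)*(t2:ℂ)^2*Complex.I^5 + (2:ℂ)*a^7*b*(t1:ℂ)*(t2:ℂ)*Complex.I^5 + (1:ℂ)*a^5*b*(t1:ℂ)*(t2:ℂ)*Complex.I^5 + (1:ℂ)*a^5*b^3*(t1:ℂ)*(t2:ℂ)*Complex.I^5 + (2:ℂ)*a^7*b^3*(t1:ℂ)*(t2:ℂ)*Complex.I^5 + (1:ℂ)*a^9*b*(t1:ℂ)*(t2:ℂ)*Complex.I^5 + (1:ℂ)*a^9*b^3*(t1:ℂ)*(t2:ℂ)*Complex.I^5 + (30:ℂ)*a^5*b^4*(t1:ℂ)^2*(t2:ℂ)^3*Complex.I^4 + (6:ℂ)*a^3*b^4*(t1:ℂ)^2*(t2:ℂ)^3*Complex.I^4 + (6:ℂ)*a^3*b^6*(t1:ℂ)^2*(t2:ℂ)^3*Complex.I^4 + (-10:ℂ)*a^6*b^5*(t1:ℂ)^2*(t2:ℂ)^4*Complex.I^4 + (-10:ℂ)*a^4*b^5*(t1:ℂ)^2*(t2:ℂ)^4*Complex.I^4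 + (-10:ℂ)*a^4*b^7*(t1:ℂ)^2*(t2:ℂ)^4*Complex.I^4 + (-10:ℂ)*a^6*b^7*(t1:ℂ)^2*(t2:ℂ)^4*Complex.I^4 + (30:ℂ)*a^5*b^6*(t1:ℂ)^2*(t2:ℂ)^3*Complex.I^4 + (24:ℂ)*a^7*b^4*(t1:ℂ)^2*(t2:ℂ)^3*Complex.I^4 + (24:ℂ)*a^7*b^6*(t1:ℂ)^2*(t2:ℂ)^3*Complex.I^4 + (-27:ℂ)*a^6*b^3*(t1:ℂ)^2*(t2:ℂ)^2*Complex.I^4 + (-9:ℂ)*a^4*b^3*(t1:ℂ)^2*(t2:ℂ)^2*Complex.I^4 + (-9:ℂ)*a^4*b^5*(t1:ℂ)^2*(t2:ℂ)^2*Complex.I^4 + (-27:ℂ)*a^6*b^5*(t1:ℂ)^2*(t2:ℂ)^2*Complex.I^4 + (-18:ℂ)*a^8*b^3*(t1:ℂ)^2*(t2:ℂ)^2*Complex.I^4 + (-18:ℂ)*a^8*b^5*(t1:ℂ)^2*(t2:ℂ)^2*Complex.I^4 + (7:ℂ)*a^7*b^2*(t1:ℂ)^2*(t2:ℂ)*Complex.I^4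 + (3:ℂ)*a^5*b^2*(t1:ℂ)^2*(t2:ℂ)*Complex.I^4 + (3:ℂ)*a^5*b^4*(t1:ℂ)^2*(t2:ℂ)*Complex.I^4 + (7:ℂ)*a^7*b^4*(t1:ℂ)^2*(t2:ℂ)*Complex.I^4 + (4:ℂ)*a^9*b^2*(t1:ℂ)^2*(t2:ℂ)*Complex.I^4 + (4:ℂ)*a^9*b^4*(t1:ℂ)^2*(t2:ℂ)*Complex.I^4 + (3:ℂ)*a^4*b^5*(t2:ℂ)^4*Complex.I^4 + (4:ℂ)*a^2*b^5*(t2:ℂ)^4*Complex.I^4 + (4:ℂ)*a^2*b^3*(t2:ℂ)^4*Complex.I^4 + (1:ℂ)*b^3*(t2:ℂ)^4*Complex.I^4 + (1:ℂ)*b^5*(t2:ℂ)^4*Complex.I^4 + (-1:ℂ)*a^3*b^6*(t2:ℂ)^5*Complex.I^4 + (-1:ℂ)*a^3*b^4*(t2:ℂ)^5*Complex.I^4 + (3:ℂ)*a^4*b^3*(t2:ℂ)^4*Complex.I^4 + (-3:ℂ)*a^5*b^4*(t2:ℂ)^3*Complex.I^4 + (-5:ℂ)*a^3*b^4*(t2:ℂ)^3*Complex.I^4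 + (-5:ℂ)*a^3*b^2*(t2:ℂ)^3*Complex.I^4 + (-2:ℂ)*a*b^2*(t2:ℂ)^3*Complex.I^4 + (-2:ℂ)*a*b^4*(t2:ℂ)^3*Complex.I^4 + (-3:ℂ)*a^5*b^2*(t2:ℂ)^3*Complex.I^4 + (1:ℂ)*a^6*b^3*(t2:ℂ)^2*Complex.I^4 + (2:ℂ)*a^4*b^3*(t2:ℂ)^2*Complex.I^4 + (2:ℂ)*a^4*b*(t2:ℂ)^2*Complex.I^4 + (1:ℂ)*a^2*b*(t2:ℂ)^2*Complex.I^4 + (1:ℂ)*a^2*b^3*(t2:ℂ)^2*Complex.I^4 + (1:ℂ)*a^6*b*(t2:ℂ)^2*Complex.I^4 + (-1:ℂ)*a*b^4*(t2:ℂ)^5*Complex.I^4 + (-1:ℂ)*a*b^6*(t2:ℂ)^5*Complex.I^4 + (-20:ℂ)*a^6*b^4*(t1:ℂ)^3*(t2:ℂ)^2*Complex.I^3 + (-4:ℂ)*a^4*b^4*(t1:ℂ)^3*(t2:ℂ)^2*Complex.I^3 + (-4:ℂ)*a^4*b^6*(t1:ℂ)^3*(t2:ℂ)^2*Complex.I^3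 + (10:ℂ)*a^7*b^5*(t1:ℂ)^3*(t2:ℂ)^3*Complex.I^3 + (10:ℂ)*a^5*b^5*(t1:ℂ)^3*(t2:ℂ)^3*Complex.I^3 + (10:ℂ)*a^5*b^7*(t1:ℂ)^3*(t2:ℂ)^3*Complex.I^3 + (10:ℂ)*a^7*b^7*(t1:ℂ)^3*(t2:ℂ)^3*Complex.I^3 + (-20:ℂ)*a^6*b^6*(t1:ℂ)^3*(t2:ℂ)^2*Complex.I^3 + (-16:ℂ)*a^8*b^4*(t1:ℂ)^3*(t2:ℂ)^2*Complex.I^3 + (-16:ℂ)*a^8*b^6*(t1:ℂ)^3*(t2:ℂ)^2*Complex.I^3 + (9:ℂ)*a^7*b^3*(t1:ℂ)^3*(t2:ℂ)*Complex.I^3 + (3:ℂ)*a^5*b^3*(t1:ℂ)^3*(t2:ℂ)*Complex.I^3 + (3:ℂ)*a^5*b^5*(t1:ℂ)^3*(t2:ℂ)*Complex.I^3 + (9:ℂ)*a^7*b^5*(t1:ℂ)^3*(t2:ℂ)*Complex.I^3 + (6:ℂ)*a^9*b^3*(t1:ℂ)^3*(t2:ℂ)*Complex.I^3 + (6:ℂ)*a^9*b^5*(t1:ℂ)^3*(t2:ℂ)*Complex.I^3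 + (-9:ℂ)*a^5*b^5*(t1:ℂ)*(t2:ℂ)^3*Complex.I^3 + (-12:ℂ)*a^3*b^5*(t1:ℂ)*(t2:ℂ)^3*Complex.I^3 + (-12:ℂ)*a^3*b^3*(t1:ℂ)*(t2:ℂ)^3*Complex.I^3 + (-3:ℂ)*a*b^3*(t1:ℂ)*(t2:ℂ)^3*Complex.I^3 + (-3:ℂ)*a*b^5*(t1:ℂ)*(t2:ℂ)^3*Complex.I^3 + (4:ℂ)*a^4*b^6*(t1:ℂ)*(t2:ℂ)^4*Complex.I^3 + (4:ℂ)*a^4*b^4*(t1:ℂ)*(t2:ℂ)^4*Complex.I^3 + (-9:ℂ)*a^5*b^3*(t1:ℂ)*(t2:ℂ)^3*Complex.I^3 + (6:ℂ)*a^6*b^4*(t1:ℂ)*(t2:ℂ)^2*Complex.I^3 + (10:ℂ)*a^4*b^4*(t1:ℂ)*(t2:ℂ)^2*Complex.I^3 + (10:ℂ)*a^4*b^2*(t1:ℂ)*(t2:ℂ)^2*Complex.I^3 + (4:ℂ)*a^2*b^2*(t1:ℂ)*(t2:ℂ)^2*Complex.I^3 + (4:ℂ)*a^2*b^4*(t1:ℂ)*(t2:ℂ)^2*Complex.I^3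 + (6:ℂ)*a^6*b^2*(t1:ℂ)*(t2:ℂ)^2*Complex.I^3 + (-1:ℂ)*a^7*b^3*(t1:ℂ)*(t2:ℂ)*Complex.I^3 + (-2:ℂ)*a^5*b^3*(t1:ℂ)*(t2:ℂ)*Complex.I^3 + (-2:ℂ)*a^5*b*(t1:ℂ)*(t2:ℂ)*Complex.I^3 + (-1:ℂ)*a^3*b*(t1:ℂ)*(t2:ℂ)*Complex.I^3 + (-1:ℂ)*a^3*b^3*(t1:ℂ)*(t2:ℂ)*Complex.I^3 + (-1:ℂ)*a^7*b*(t1:ℂ)*(t2:ℂ)*Complex.I^3 + (4:ℂ)*a^2*b^4*(t1:ℂ)*(t2:ℂ)^4*Complex.I^3 + (4:ℂ)*a^2*b^6*(t1:ℂ)*(t2:ℂ)^4*Complex.I^3 + (9:ℂ)*a^6*b^5*(t1:ℂ)^2*(t2:ℂ)^2*Complex.I^2 + (12:ℂ)*a^4*b^5*(t1:ℂ)^2*(t2:ℂ)^2*Complex.I^2 + (12:ℂ)*a^4*b^3*(t1:ℂ)^2*(t2:ℂ)^2*Complex.I^2 + (3:ℂ)*a^2*b^3*(t1:ℂ)^2*(t2:ℂ)^2*Complex.I^2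 + (5:ℂ)*a^7*b^4*(t1:ℂ)^4*(t2:ℂ)*Complex.I^2 + (1:ℂ)*a^5*b^4*(t1:ℂ)^4*(t2:ℂ)*Complex.I^2 + (1:ℂ)*a^5*b^6*(t1:ℂ)^4*(t2:ℂ)*Complex.I^2 + (-5:ℂ)*a^8*b^5*(t1:ℂ)^4*(t2:ℂ)^2*Complex.I^2 + (-5:ℂ)*a^6*b^5*(t1:ℂ)^4*(t2:ℂ)^2*Complex.I^2 + (-5:ℂ)*a^6*b^7*(t1:ℂ)^4*(t2:ℂ)^2*Complex.I^2 + (-5:ℂ)*a^8*b^7*(t1:ℂ)^4*(t2:ℂ)^2*Complex.I^2 + (5:ℂ)*a^7*b^6*(t1:ℂ)^4*(t2:ℂ)*Complex.I^2 + (4:ℂ)*a^9*b^4*(t1:ℂ)^4*(t2:ℂ)*Complex.I^2 + (4:ℂ)*a^9*b^6*(t1:ℂ)^4*(t2:ℂ)*Complex.I^2 + (3:ℂ)*a^2*b^5*(t1:ℂ)^2*(t2:ℂ)^2*Complex.I^2 + (-6:ℂ)*a^5*b^6*(t1:ℂ)^2*(t2:ℂ)^3*Complex.I^2 + (-6:ℂ)*a^5*b^4*(t1:ℂ)^2*(t2:ℂ)^3*Complex.I^2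 + (9:ℂ)*a^6*b^3*(t1:ℂ)^2*(t2:ℂ)^2*Complex.I^2 + (-3:ℂ)*a^7*b^4*(t1:ℂ)^2*(t2:ℂ)*Complex.I^2 + (-5:ℂ)*a^5*b^4*(t1:ℂ)^2*(t2:ℂ)*Complex.I^2 + (-5:ℂ)*a^5*b^2*(t1:ℂ)^2*(t2:ℂ)*Complex.I^2 + (-2:ℂ)*a^3*b^2*(t1:ℂ)^2*(t2:ℂ)*Complex.I^2 + (-2:ℂ)*a^3*b^4*(t1:ℂ)^2*(t2:ℂ)*Complex.I^2 + (-3:ℂ)*a^7*b^2*(t1:ℂ)^2*(t2:ℂ)*Complex.I^2 + (-6:ℂ)*a^3*b^4*(t1:ℂ)^2*(t2:ℂ)^3*Complex.I^2 + (-6:ℂ)*a^3*b^6*(t1:ℂ)^2*(t2:ℂ)^3*Complex.I^2 + (-3:ℂ)*a^7*b^5*(t1:ℂ)^3*(t2:ℂ)*Complex.I + (-4:ℂ)*a^5*b^5*(t1:ℂ)^3*(t2:ℂ)*Complex.I + (-4:ℂ)*a^5*b^3*(t1:ℂ)^3*(t2:ℂ)*Complex.I + (-1:ℂ)*a^3*b^3*(t1:ℂ)^3*(t2:ℂ)*Complex.I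 + (-1:ℂ)*a^3*b^5*(t1:ℂ)^3*(t2:ℂ)*Complex.I + (1:ℂ)*a^9*b^5*(t1:ℂ)^5*(t2:ℂ)*Complex.I + (1:ℂ)*a^7*b^5*(t1:ℂ)^5*(t2:ℂ)*Complex.I + (1:ℂ)*a^7*b^7*(t1:ℂ)^5*(t2:ℂ)*Complex.I + (1:ℂ)*a^9*b^7*(t1:ℂ)^5*(t2:ℂ)*Complex.I + (4:ℂ)*a^6*b^6*(t1:ℂ)^3*(t2:ℂ)^2*Complex.I + (4:ℂ)*a^6*b^4*(t1:ℂ)^3*(t2:ℂ)^2*Complex.I + (-3:ℂ)*a^7*b^3*(t1:ℂ)^3*(t2:ℂ)*Complex.I + (4:ℂ)*a^4*b^4*(t1:ℂ)^3*(t2:ℂ)^2*Complex.I + (4:ℂ)*a^4*b^6*(t1:ℂ)^3*(t2:ℂ)^2*Complex.I + (-1:ℂ)*a^7*b^6*(t1:ℂ)^4*(t2:ℂ) + (-1:ℂ)*a^7*b^4*(t1:ℂ)^4*(t2:ℂ) + (-1:ℂ)*a^5*b^4*(t1:ℂ)^4*(t2:ℂ) + (-1:ℂ)*a^5*b^6*(t1:ℂ)^4*(t2:ℂ))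 * Complex.I_sq
  linear_combination (2*(π:ℂ))⁻¹*(b - Complex.I*↑t3*(a*b))*hIA
    + (2*(π:ℂ))⁻¹*(b - Complex.I*↑t3*(a*b))*hIB + key
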